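/- The set Ω₀ of zero-discord states is not convex: for dA = dB = 2 there exist ρ₁, ρ₂ ∈ Ω₀ such that the mixture ρ = (1/2)ρ₁ + (1/2)ρ₂ satisfies [ρ, (Tr_B ρ) ⊗ I₂] ≠ 0, and hence ρ ∉ Ω₀. Concretely, ρ₁ = (e₀e₀*) ⊗ (e₀e₀*) and ρ₂ = (v v*) ⊗ (e₁e₁*), where e₀, e₁ is the standard basis of ℂ² and v = (e₀ + e₁)/√2, provide such a pair. -/

import Mathlib

open Matrix MeasureTheory
open scoped Kronecker ComplexOrder

/-- A density matrix: positive semidefinite with unit trace. -/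
def IsDensityMatrix {n : Type*} [Fintype n] (ρ : Matrix n n ℂ) : Prop :=
  ρ.PosSemidef ∧ ρ.trace = 1

/-- Partial trace over the second subsystem. -/
noncomputable def ptraceB {dA dB : ℕ} (ρ : Matrix (Fin dA × Fin dB) (Fin dA × Fin dB) ℂ) :
    Matrix (Fin dA) (Fin dA) ℂ :=
  Matrix.of fun a a' => ∑ b, ρ (a, b) (a', b)

/-- Zero-discord (classical-quantum) states: block diagonal in some
orthonormal local basis of the first subsystem. -/
def IsZeroDiscord {dA dB : ℕ} (ρ : Matrix (Fin dA × Fin dB) (Fin dA × Fin dB) ℂ) : Prop :=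
  ∃ (v : Fin dA → (Fin dA → ℂ)) (p : Fin dA → ℝ)
    (σ : Fin dA → Matrix (Fin dB) (Fin dB) ℂ),
      (∀ j k, star (v j) ⬝ᵥ v k = if j = k then 1 else 0) ∧
      (∀ j, 0 ≤ p j) ∧ (∑ j, p j = 1) ∧
      (∀ j, IsDensityMatrix (σ j)) ∧
      ρ = ∑ j, (p j : ℂ) • (Matrix.vecMulVec (v j) (star (v j)) ⊗ₖ σ j)

/-- The standard basis vector `e₀` of `ℂ²`. -/
def e0 : Fin 2 → ℂ := fun i => if i = 0 then 1 else 0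

/-- The standard basis vector `e₁` of `ℂ²`. -/
def e1 : Fin 2 → ℂ := fun i => if i = 1 then 1 else 0

/-- The vector `v = (e₀ + e₁)/√2` of `ℂ²`. -/
noncomputable def vPlus : Fin 2 → ℂ := fun _ => (1 / Real.sqrt 2 : ℝ)

/-! ### Auxiliary lemmas -/

lemma vmv_herm {n : ℕ} (v : Fin n → ℂ) : (vecMulVec v (star v)).IsHermitian := by
  ext i j
  simp [Matrix.conjTranspose_apply, vecMulVec_apply, mul_comm]

lemma vmv_psd {n : ℕ} (v : Fin n → ℂ) : (vecMulVec v (star v)).PosSemidef := by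
  refine .of_dotProduct_mulVec_nonneg (vmv_herm v) fun x => ?_
  have h : star x ⬝ᵥ (vecMulVec v (star v)).mulVec x
      = star (star v ⬝ᵥ x) * (star v ⬝ᵥ x) := by
    simp only [dotProduct, mulVec, vecMulVec_apply, Pi.star_apply, star_sum, star_mul',
      star_star, Finset.sum_mul, Finset.mul_sum]
    rw [Finset.sum_comm]
    apply Finset.sum_congr rfl; intro i _
    apply Finset.sum_congr rfl; intro j _
    ring
  rw [h]
  exact star_mul_self_nonneg _

lemma vmv_mul {n : ℕ} (a b c d : Fin n → ℂ) :
    vecMulVec a b * vecMulVec c d = (b ⬝ᵥ c) • vecMulVec a d := by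
  ext i j
  simp only [mul_apply, vecMulVec_apply, Matrix.smul_apply, dotProduct, smul_eq_mul,
    Finset.sum_mul]
  apply Finset.sum_congr rfl; intro x _
  ring

lemma sum_kron {n m : ℕ} {ι : Type*} (s : Finset ι) (f : ι → Matrix (Fin n) (Fin n) ℂ)
    (B : Matrix (Fin m) (Fin m) ℂ) :
    (∑ i ∈ s, f i) ⊗ₖ B = ∑ i ∈ s, (f i ⊗ₖ B) := by
  ext ⟨a, c⟩ ⟨b, d⟩
  simp [kroneckerMap_apply, Matrix.sum_apply, Finset.sum_mul]

/-- Any zero-discord state commutes with its reduced state (tensored with the identity). -/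
lemma zd_comm {dA dB : ℕ} {ρ : Matrix (Fin dA × Fin dB) (Fin dA × Fin dB) ℂ}
    (h : IsZeroDiscord ρ) :
    ρ * (ptraceB ρ ⊗ₖ (1 : Matrix (Fin dB) (Fin dB) ℂ))
      = (ptraceB ρ ⊗ₖ (1 : Matrix (Fin dB) (Fin dB) ℂ)) * ρ := by
  obtain ⟨v, p, σ, horth, _, _, hσ, hρ⟩ := h
  set P : Fin dA → Matrix (Fin dA) (Fin dA) ℂ := fun j => vecMulVec (v j) (star (v j)) with hP
  have hPmul : ∀ j k, P j * P k = if j = k then P j else 0 := by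
    intro j k
    by_cases h : j = k
    · subst h; rw [hP]; simp [vmv_mul, horth j j]
    · rw [hP]; simp [vmv_mul, horth j k, h]
  have hpt : ptraceB ρ = ∑ j, (p j : ℂ) • P j := by
    ext a a'
    simp only [ptraceB, of_apply, hρ, Matrix.sum_apply, Matrix.smul_apply, kroneckerMap_apply,
      smul_eq_mul]
    rw [Finset.sum_comm]
    apply Finset.sum_congr rfl; intro j _
    rw [← Finset.mul_sum, ← Finset.mul_sum]
    have ht : ∑ b, σ j b b = 1 := (hσ j).2
    rw [ht, mul_one]
  rw [hpt, hρ]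
  have hl : (∑ j, (p j : ℂ) • (P j ⊗ₖ σ j)) * ((∑ j, (p j : ℂ) • P j) ⊗ₖ (1 : Matrix (Fin dB) (Fin dB) ℂ))
      = ∑ j, ((p j : ℂ) * p j) • (P j ⊗ₖ σ j) := by
    rw [sum_kron]
    rw [Finset.sum_mul_sum]
    rw [Finset.sum_comm]
    apply Finset.sum_congr rfl; intro k _
    rw [Finset.sum_eq_single k]
    · rw [Matrix.smul_kronecker, smul_mul_assoc, mul_smul_comm, ← mul_kronecker_mul,
        hPmul, if_pos rfl, mul_one, smul_smul]
    · intro j _ hj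
      rw [Matrix.smul_kronecker, smul_mul_assoc, mul_smul_comm, ← mul_kronecker_mul,
        hPmul, if_neg hj]
      simp
    · simp
  have hr : ((∑ j, (p j : ℂ) • P j) ⊗ₖ (1 : Matrix (Fin dB) (Fin dB) ℂ)) * (∑ j, (p j : ℂ) • (P j ⊗ₖ σ j))
      = ∑ j, ((p j : ℂ) * p j) • (P j ⊗ₖ σ j) := by
    rw [sum_kron]
    rw [Finset.sum_mul_sum]
    apply Finset.sum_congr rfl; intro j _
    rw [Finset.sum_eq_single j]
    · rw [Matrix.smul_kronecker, smul_mul_assoc, mul_smul_comm, ← mul_kronecker_mul,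
        hPmul, if_pos rfl, one_mul, smul_smul]
    · intro k _ hk
      rw [Matrix.smul_kronecker, smul_mul_assoc, mul_smul_comm, ← mul_kronecker_mul,
        hPmul, if_neg (Ne.symm hk)]
      simp
    · simp
  rw [hl, hr]

lemma half : ((1 / Real.sqrt 2 : ℝ) : ℂ) * ((1 / Real.sqrt 2 : ℝ) : ℂ) = 1 / 2 := by
  have h : (1 / Real.sqrt 2) * (1 / Real.sqrt 2) = (1 / 2 : ℝ) := by
    rw [div_mul_div_comm, one_mul, Real.mul_self_sqrt (by norm_num)]
  rw [← Complex.ofReal_mul, h]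
  norm_num

lemma e0_dens : IsDensityMatrix (vecMulVec e0 (star e0)) := by
  refine ⟨vmv_psd e0, ?_⟩
  simp [Matrix.trace, vecMulVec_apply, e0, Fin.sum_univ_two]

lemma e1_dens : IsDensityMatrix (vecMulVec e1 (star e1)) := by
  refine ⟨vmv_psd e1, ?_⟩
  simp [Matrix.trace, vecMulVec_apply, e1, Fin.sum_univ_two]

/-- The vector `(e₀ - e₁)/√2`, orthogonal complement of `vPlus`. -/
noncomputable def wMinus : Fin 2 → ℂ :=
  fun i => if i = 0 then ((1 / Real.sqrt 2 : ℝ) : ℂ) else -((1 / Real.sqrt 2 : ℝ) : ℂ)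

/-- `Ω₀` is not convex: the zero-discord states
`ρ₁ = (e₀e₀*) ⊗ (e₀e₀*)` and `ρ₂ = (vv*) ⊗ (e₁e₁*)` have a uniform mixture
`ρ = ½ρ₁ + ½ρ₂` whose commutator with its reduced state is nonzero, so
`ρ ∉ Ω₀`. -/
theorem Omega0_not_convex :
    IsZeroDiscord (Matrix.vecMulVec e0 (star e0) ⊗ₖ Matrix.vecMulVec e0 (star e0)) ∧
    IsZeroDiscord (Matrix.vecMulVec vPlus (star vPlus) ⊗ₖ Matrix.vecMulVec e1 (star e1)) ∧
    ((1 / 2 : ℂ) • (Matrix.vecMulVec e0 (star e0) ⊗ₖ Matrix.vecMulVec e0 (star e0)) +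
        (1 / 2 : ℂ) • (Matrix.vecMulVec vPlus (star vPlus) ⊗ₖ Matrix.vecMulVec e1 (star e1))) *
      (ptraceB ((1 / 2 : ℂ) • (Matrix.vecMulVec e0 (star e0) ⊗ₖ Matrix.vecMulVec e0 (star e0)) +
          (1 / 2 : ℂ) • (Matrix.vecMulVec vPlus (star vPlus) ⊗ₖ Matrix.vecMulVec e1 (star e1)))
        ⊗ₖ (1 : Matrix (Fin 2) (Fin 2) ℂ)) ≠
      (ptraceB ((1 / 2 : ℂ) • (Matrix.vecMulVec e0 (star e0) ⊗ₖ Matrix.vecMulVec e0 (star e0)) +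
          (1 / 2 : ℂ) • (Matrix.vecMulVec vPlus (star vPlus) ⊗ₖ Matrix.vecMulVec e1 (star e1)))
        ⊗ₖ (1 : Matrix (Fin 2) (Fin 2) ℂ)) *
      ((1 / 2 : ℂ) • (Matrix.vecMulVec e0 (star e0) ⊗ₖ Matrix.vecMulVec e0 (star e0)) +
        (1 / 2 : ℂ) • (Matrix.vecMulVec vPlus (star vPlus) ⊗ₖ Matrix.vecMulVec e1 (star e1))) ∧
    ¬ IsZeroDiscord
      ((1 / 2 : ℂ) • (Matrix.vecMulVec e0 (star e0) ⊗ₖ Matrix.vecMulVec e0 (star e0)) +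
        (1 / 2 : ℂ) • (Matrix.vecMulVec vPlus (star vPlus) ⊗ₖ Matrix.vecMulVec e1 (star e1))) := by
  have h1 : IsZeroDiscord
      (Matrix.vecMulVec e0 (star e0) ⊗ₖ Matrix.vecMulVec e0 (star e0)) := by
    refine ⟨![e0, e1], ![1, 0], fun _ => vecMulVec e0 (star e0), ?_, ?_, ?_, ?_, ?_⟩
    · intro j k
      fin_cases j <;> fin_cases k <;>
        simp [dotProduct, Fin.sum_univ_two, e0, e1]
    · intro j; fin_cases j <;> norm_num
    · simp [Fin.sum_univ_two]
    · intro _; exact e0_dens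
    · simp [Fin.sum_univ_two]
  have h2 : IsZeroDiscord
      (Matrix.vecMulVec vPlus (star vPlus) ⊗ₖ Matrix.vecMulVec e1 (star e1)) := by
    refine ⟨![vPlus, wMinus], ![1, 0], fun _ => vecMulVec e1 (star e1), ?_, ?_, ?_, ?_, ?_⟩
    · intro j k
      fin_cases j <;> fin_cases k <;>
        simp [dotProduct, Fin.sum_univ_two, vPlus, wMinus, Complex.conj_ofReal, half] <;>
        ring_nf <;> simp [← Complex.ofReal_pow, Real.sq_sqrt]
    · intro j; fin_cases j <;> norm_num
    · simp [Fin.sum_univ_two]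
    · intro _; exact e1_dens
    · simp [Fin.sum_univ_two]
  have h3 : ((1 / 2 : ℂ) • (Matrix.vecMulVec e0 (star e0) ⊗ₖ Matrix.vecMulVec e0 (star e0)) +
        (1 / 2 : ℂ) • (Matrix.vecMulVec vPlus (star vPlus) ⊗ₖ Matrix.vecMulVec e1 (star e1))) *
      (ptraceB ((1 / 2 : ℂ) • (Matrix.vecMulVec e0 (star e0) ⊗ₖ Matrix.vecMulVec e0 (star e0)) +
          (1 / 2 : ℂ) • (Matrix.vecMulVec vPlus (star vPlus) ⊗ₖ Matrix.vecMulVec e1 (star e1)))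
        ⊗ₖ (1 : Matrix (Fin 2) (Fin 2) ℂ)) ≠
      (ptraceB ((1 / 2 : ℂ) • (Matrix.vecMulVec e0 (star e0) ⊗ₖ Matrix.vecMulVec e0 (star e0)) +
          (1 / 2 : ℂ) • (Matrix.vecMulVec vPlus (star vPlus) ⊗ₖ Matrix.vecMulVec e1 (star e1)))
        ⊗ₖ (1 : Matrix (Fin 2) (Fin 2) ℂ)) *
      ((1 / 2 : ℂ) • (Matrix.vecMulVec e0 (star e0) ⊗ₖ Matrix.vecMulVec e0 (star e0)) +
        (1 / 2 : ℂ) • (Matrix.vecMulVec vPlus (star vPlus) ⊗ₖ Matrix.vecMulVec e1 (star e1))) := by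
    intro h
    have h2 := congrArg (fun M => M ((0 : Fin 2), (0 : Fin 2)) ((1 : Fin 2), (0 : Fin 2))) h
    simp only [mul_apply, Fintype.sum_prod_type, Fin.sum_univ_two, ptraceB, kroneckerMap_apply,
      vecMulVec_apply, e0, e1, vPlus, Matrix.one_apply, Matrix.add_apply, Matrix.smul_apply,
      Matrix.of_apply, Pi.star_apply, Complex.conj_ofReal, smul_eq_mul] at h2
    norm_num [half] at h2
  exact ⟨h1, h2, h3, fun hzd => h3 (zd_comm hzd)⟩
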